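/- For all nonnegative integers n and k, the number of binary trees with n vertices whose hook number equals k is equal to the number of rooted plane (ordered) trees with n edges having exactly k vertices with at least one child which is a leaf. -/

import Mathlib

/-- Binary trees: `leaf` is the empty tree, `node l r` is a vertex with
left subtree `l` and right subtree `r`. -/
inductive BT : Type
  | leaf : BT
  | node : BT → BT → BT
  deriving DecidableEq

/-- Number of vertices of a binary tree. -/
def BT.size : BT → ℕ
  | leaf => 0
  | node l r => 1 + l.size + r.size

mutual
  /-- The number of hooks in the hook partition of a binary tree: one hook for the
  root, plus the hooks of the trees hanging off the root's hook. -/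
  def hookCount : BT → ℕ
    | .leaf => 0
    | .node l r => 1 + hookAuxL l + hookAuxR r
  /-- Total number of hooks of the right subtrees hanging off the leftmost branch. -/
  def hookAuxL : BT → ℕ
    | .leaf => 0
    | .node l r => hookCount r + hookAuxL l
  /-- Total number of hooks of the left subtrees hanging off the rightmost branch. -/
  def hookAuxR : BT → ℕ
    | .leaf => 0
    | .node l r => hookCount l + hookAuxR r
end
/-- Rooted plane (ordered) trees: a root together with a (linearly ordered, possibly
empty) list of subtrees. -/
inductive PTree : Type
  | node : List PTree → PTree

/-- Number of edges of a rooted plane tree. -/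
def PTree.edges : PTree → ℕ
  | .node ts => ts.length + (ts.attach.map (fun x => PTree.edges x.1)).sum
decreasing_by
  have := List.sizeOf_lt_of_mem x.2
  simp only [PTree.node.sizeOf_spec]
  omega

/-- Whether a rooted plane tree is a single vertex (a leaf). -/
def PTree.isLeaf : PTree → Bool
  | .node ts => ts.isEmpty

/-- The number of vertices of a rooted plane tree having at least one child which is
a leaf. -/
def PTree.cl : PTree → ℕ
  | .node ts => (if ts.any PTree.isLeaf then 1 else 0) + (ts.attach.map (fun x => PTree.cl x.1)).sum
decreasing_by
  have := List.sizeOf_lt_of_mem x.2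
  simp only [PTree.node.sizeOf_spec]
  omega

/-! ### Auxiliary development -/

theorem PTree.edges_node (ts : List PTree) :
    (PTree.node ts).edges = ts.length + (ts.map PTree.edges).sum := by
  rw [PTree.edges]; simp

theorem PTree.cl_node (ts : List PTree) :
    (PTree.node ts).cl = (if ts.any PTree.isLeaf then 1 else 0) + (ts.map PTree.cl).sum := by
  rw [PTree.cl]; simp

/-- Forest edge count. -/
def eF (F : List PTree) : ℕ := F.length + (F.map PTree.edges).sum
/-- Forest `cl` sum. -/
def cF (F : List PTree) : ℕ := (F.map PTree.cl).sum

@[simp] theorem eF_nil : eF [] = 0 := rfl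
@[simp] theorem cF_nil : cF [] = 0 := rfl
@[simp] theorem eF_cons (a : PTree) (F : List PTree) : eF (a :: F) = 1 + a.edges + eF F := by
  simp [eF]; omega
@[simp] theorem cF_cons (a : PTree) (F : List PTree) : cF (a :: F) = a.cl + cF F := by
  simp [cF]
@[simp] theorem eF_append (F G : List PTree) : eF (F ++ G) = eF F + eF G := by
  simp [eF]; omega
@[simp] theorem cF_append (F G : List PTree) : cF (F ++ G) = cF F + cF G := by
  simp [cF]
@[simp] theorem edges_nil : (PTree.node []).edges = 0 := by simp [PTree.edges_node]
@[simp] theorem cl_nil : (PTree.node []).cl = 0 := by simp [PTree.cl_node, PTree.isLeaf]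
@[simp] theorem isLeaf_nil : (PTree.node []).isLeaf = true := by simp [PTree.isLeaf]

theorem dropWhile_head_false {α : Type*} {p : α → Bool} {l : List α} {a : α} {G : List α}
    (h : l.dropWhile p = a :: G) : p a = false := by
  induction l with
  | nil => simp [List.dropWhile] at h
  | cons b l ih =>
    rw [List.dropWhile_cons] at h
    by_cases hp : p b
    · simp [hp] at h; exact ih h
    · simp [hp] at h; rw [← h.1]; simpa using hp

theorem dropWhile_append_of_forall {α : Type*} {p : α → Bool} {l1 l2 : List α}
    (h : ∀ a ∈ l1, p a = true) : (l1 ++ l2).dropWhile p = l2.dropWhile p := by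
  induction l1 with
  | nil => simp
  | cons a l ih =>
    simp only [List.cons_append, List.dropWhile_cons, h a (by simp)]
    exact ih (fun a ha => h a (by simp [ha]))

theorem takeWhile_append_of_forall {α : Type*} {p : α → Bool} {l1 l2 : List α}
    (h : ∀ a ∈ l1, p a = true) : (l1 ++ l2).takeWhile p = l1 ++ l2.takeWhile p := by
  induction l1 with
  | nil => simp
  | cons a l ih =>
    simp only [List.cons_append, List.takeWhile_cons, h a (by simp)]
    simp [ih (fun a ha => h a (by simp [ha]))]

/-- The predicate "is not a leaf". -/
abbrev nl : PTree → Bool := fun t => !t.isLeaf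

open Classical in
/-- The assembly map from a pair of forests to a (nonempty) plane tree. -/
noncomputable def psi (F1 F2 : List PTree) : PTree :=
  if _h : F1.dropWhile nl = [] then
    .node (F1 ++ .node [] :: F2)
  else
    .node (psi (F1.dropWhile nl).tail F2 :: F1.takeWhile nl)
termination_by F1.length
decreasing_by
  have h1 : (F1.dropWhile nl).length ≤ F1.length := (List.dropWhile_sublist _).length_le
  have h2 : (F1.dropWhile nl).length ≠ 0 := by simpa using _h
  simp [List.length_tail]; omega

theorem psi_eq_nil {F1 : List PTree} (F2 : List PTree) (h : F1.dropWhile nl = []) :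
    psi F1 F2 = .node (F1 ++ .node [] :: F2) := by
  rw [psi]; rw [dif_pos h]

theorem psi_eq_pos {F1 : List PTree} (F2 : List PTree) (h : F1.dropWhile nl ≠ []) :
    psi F1 F2 = .node (psi (F1.dropWhile nl).tail F2 :: F1.takeWhile nl) := by
  rw [psi]; rw [dif_neg h]

theorem decompose {F1 : List PTree} (h : F1.dropWhile nl ≠ []) :
    F1 = F1.takeWhile nl ++ PTree.node [] :: (F1.dropWhile nl).tail := by
  obtain ⟨d, G, hd⟩ : ∃ d G, F1.dropWhile nl = d :: G := by
    cases hdw : F1.dropWhile nl with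
    | nil => exact absurd hdw h
    | cons d G => exact ⟨d, G, rfl⟩
  have hdf : nl d = false := dropWhile_head_false hd
  have : d = PTree.node [] := by
    obtain ⟨ss⟩ := d
    simp [nl, PTree.isLeaf] at hdf
    simp [hdf]
  rw [this] at hd
  conv_lhs => rw [← List.takeWhile_append_dropWhile (p := nl) (l := F1)]
  rw [hd]
  simp

theorem psi_isLeaf (F1 F2 : List PTree) : (psi F1 F2).isLeaf = false := by
  by_cases h : F1.dropWhile nl = []
  · rw [psi_eq_nil _ h]; obtain ⟨⟩ | ⟨a, F⟩ := F1 <;> simp [PTree.isLeaf]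
  · rw [psi_eq_pos _ h]; simp [PTree.isLeaf]

theorem psi_edges (F1 F2 : List PTree) : (psi F1 F2).edges = 1 + eF F1 + eF F2 := by
  by_cases h : F1.dropWhile nl = []
  · rw [psi_eq_nil _ h, PTree.edges_node]
    simp [eF]; omega
  · rw [psi_eq_pos _ h, PTree.edges_node]
    have ih := psi_edges (F1.dropWhile nl).tail F2
    have key : eF F1 = eF (F1.takeWhile nl) + 1 + eF (F1.dropWhile nl).tail := by
      conv_lhs => rw [decompose h]
      simp; omega
    simp only [List.map_cons, List.length_cons, List.sum_cons, ih]
    have : eF (F1.takeWhile nl) = (F1.takeWhile nl).length + ((F1.takeWhile nl).map PTree.edges).sum := rfl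
    omega
termination_by F1.length
decreasing_by
  have h1 : (F1.dropWhile nl).length ≤ F1.length := (List.dropWhile_sublist _).length_le
  have h2 : (F1.dropWhile nl).length ≠ 0 := by simpa using h
  simp [List.length_tail]; omega

theorem psi_cl (F1 F2 : List PTree) : (psi F1 F2).cl = 1 + cF F1 + cF F2 := by
  by_cases h : F1.dropWhile nl = []
  · rw [psi_eq_nil _ h, PTree.cl_node]
    have hany : (F1 ++ PTree.node [] :: F2).any PTree.isLeaf = true := by
      rw [List.any_eq_true]
      exact ⟨PTree.node [], by simp, by simp [PTree.isLeaf]⟩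
    rw [hany, if_pos rfl]
    simp only [List.map_append, List.sum_append, List.map_cons, List.sum_cons, cl_nil, cF]
    omega
  · rw [psi_eq_pos _ h, PTree.cl_node]
    have ih := psi_cl (F1.dropWhile nl).tail F2
    have hany : ((psi (F1.dropWhile nl).tail F2 :: F1.takeWhile nl).any PTree.isLeaf) = false := by
      simp only [List.any_cons, psi_isLeaf, Bool.false_or, List.any_eq_false]
      intro t ht
      have := List.mem_takeWhile_imp ht
      simpa [nl] using this
    rw [hany]
    have key : cF F1 = cF (F1.takeWhile nl) + cF (F1.dropWhile nl).tail := by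
      conv_lhs => rw [decompose h]
      simp
    simp only [List.map_cons, List.sum_cons, ih, if_neg Bool.false_ne_true]
    have : cF (F1.takeWhile nl) = ((F1.takeWhile nl).map PTree.cl).sum := rfl
    omega
termination_by F1.length
decreasing_by
  have h1 : (F1.dropWhile nl).length ≤ F1.length := (List.dropWhile_sublist _).length_le
  have h2 : (F1.dropWhile nl).length ≠ 0 := by simpa using h
  simp [List.length_tail]; omega

theorem split_unique {us us' vs vs' : List PTree}
    (h1 : ∀ t ∈ us, t.isLeaf = false) (h2 : ∀ t ∈ us', t.isLeaf = false)
    (h : us ++ PTree.node [] :: vs = us' ++ PTree.node [] :: vs') : us = us' ∧ vs = vs' := by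
  induction us generalizing us' with
  | nil =>
    cases us' with
    | nil => simpa using h
    | cons a l =>
      simp only [List.nil_append, List.cons_append, List.cons.injEq] at h
      have := h2 a (by simp)
      rw [← h.1] at this
      simp at this
  | cons a l ih =>
    cases us' with
    | nil =>
      simp only [List.nil_append, List.cons_append, List.cons.injEq] at h
      have := h1 a (by simp)
      rw [h.1] at this
      simp at this
    | cons b m =>
      simp only [List.cons_append, List.cons.injEq] at h
      obtain ⟨hab, h'⟩ := h
      obtain ⟨hu, hv⟩ := ih (fun t ht => h1 t (by simp [ht])) (fun t ht => h2 t (by simp [ht])) h'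
      exact ⟨by rw [hab, hu], hv⟩

theorem psi_inj {F1 F2 G1 G2 : List PTree} (h : psi F1 F2 = psi G1 G2) :
    F1 = G1 ∧ F2 = G2 := by
  by_cases h1 : F1.dropWhile nl = [] <;> by_cases h2 : G1.dropWhile nl = []
  · rw [psi_eq_nil _ h1, psi_eq_nil _ h2] at h
    have hl := PTree.node.inj h
    exact split_unique
      (fun t ht => by simpa [nl] using List.dropWhile_eq_nil_iff.mp h1 t ht)
      (fun t ht => by simpa [nl] using List.dropWhile_eq_nil_iff.mp h2 t ht) hl
  · rw [psi_eq_nil _ h1, psi_eq_pos _ h2] at h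
    have hl := PTree.node.inj h
    exfalso
    have hmem : PTree.node [] ∈ psi (G1.dropWhile nl).tail G2 :: G1.takeWhile nl := by
      rw [← hl]; simp
    rcases List.mem_cons.mp hmem with heq | hmem
    · have := psi_isLeaf (G1.dropWhile nl).tail G2
      rw [← heq] at this
      simp at this
    · have := List.mem_takeWhile_imp hmem
      simp [nl] at this
  · rw [psi_eq_pos _ h1, psi_eq_nil _ h2] at h
    have hl := PTree.node.inj h
    exfalso
    have hmem : PTree.node [] ∈ psi (F1.dropWhile nl).tail F2 :: F1.takeWhile nl := by
      rw [hl]; simp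
    rcases List.mem_cons.mp hmem with heq | hmem
    · have := psi_isLeaf (F1.dropWhile nl).tail F2
      rw [← heq] at this
      simp at this
    · have := List.mem_takeWhile_imp hmem
      simp [nl] at this
  · rw [psi_eq_pos _ h1, psi_eq_pos _ h2] at h
    have hl := PTree.node.inj h
    simp only [List.cons.injEq] at hl
    obtain ⟨hpsi, htw⟩ := hl
    obtain ⟨hd, hF2⟩ := psi_inj hpsi
    refine ⟨?_, hF2⟩
    rw [decompose h1, decompose h2, htw, hd]
termination_by F1.length
decreasing_by
  have ha : (F1.dropWhile nl).length ≤ F1.length := (List.dropWhile_sublist _).length_le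
  have hb : (F1.dropWhile nl).length ≠ 0 := by simpa using h1
  simp [List.length_tail]; omega

theorem sizeOf_pos_list (l : List PTree) : 1 ≤ sizeOf l := by
  cases l <;> simp <;> omega

theorem sizeOf_ge_two (t : PTree) : 2 ≤ sizeOf t := by
  obtain ⟨ss⟩ := t
  have := sizeOf_pos_list ss
  simp
  omega

theorem psi_surj (ts : List PTree) (h : ts ≠ []) :
    ∃ F1 F2, (∀ t ∈ F1, sizeOf t < sizeOf (PTree.node ts)) ∧
      (∀ t ∈ F2, sizeOf t < sizeOf (PTree.node ts)) ∧ psi F1 F2 = PTree.node ts := by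
  have hmemsize : ∀ t ∈ ts, sizeOf t < sizeOf (PTree.node ts) := by
    intro t ht
    have := List.sizeOf_lt_of_mem ht
    simp; omega
  by_cases hdw : ts.dropWhile nl = []
  · -- ts is leaf-free; ts = t :: ts' with t = node ss, ss ≠ []
    obtain ⟨t, ts', hts⟩ := List.exists_cons_of_ne_nil h
    obtain ⟨ss⟩ := t
    have hnl : ss ≠ [] := by
      have := List.dropWhile_eq_nil_iff.mp hdw (PTree.node ss) (by simp [hts])
      simp [nl, PTree.isLeaf] at this
      simpa using this
    have hss : sizeOf ss < sizeOf ts := by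
      rw [hts]; simp; omega
    obtain ⟨G1, G2, hg1, hg2, hpsi⟩ := psi_surj ss hnl
    have hts'size : sizeOf ts' < sizeOf ts := by rw [hts]; simp
    have hbig : 4 ≤ sizeOf (PTree.node ts) := by
      have p1 := sizeOf_pos_list ss
      have p2 := sizeOf_pos_list ts'
      rw [hts]; simp; omega
    have e1 : sizeOf (PTree.node ts) = 1 + sizeOf ts := by simp
    have e2 : sizeOf (PTree.node ss) = 1 + sizeOf ss := by simp
    refine ⟨ts' ++ PTree.node [] :: G1, G2, ?_, ?_, ?_⟩
    · intro u hu
      rcases List.mem_append.mp hu with hu | hu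
      · exact hmemsize u (by simp [hts, hu])
      · rcases List.mem_cons.mp hu with rfl | hu
        · have e3 : sizeOf (PTree.node ([] : List PTree)) = 2 := by simp
          omega
        · have h1 := hg1 u hu
          omega
    · intro u hu
      have h1 := hg2 u hu
      omega
    · have hts' : ∀ a ∈ ts', nl a = true := by
        intro a ha
        exact List.dropWhile_eq_nil_iff.mp hdw a (by simp [hts, ha])
      have hdrop : (ts' ++ PTree.node [] :: G1).dropWhile nl = PTree.node [] :: G1 := by
        rw [dropWhile_append_of_forall hts', List.dropWhile_cons]
        simp [nl]
      have htake : (ts' ++ PTree.node [] :: G1).takeWhile nl = ts' := by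
        rw [takeWhile_append_of_forall hts', List.takeWhile_cons]
        simp [nl]
      rw [psi_eq_pos _ (by rw [hdrop]; simp), hdrop, htake]
      simp only [List.tail_cons]
      rw [hts, hpsi]
  · -- ts contains a leaf
    refine ⟨ts.takeWhile nl, (ts.dropWhile nl).tail, ?_, ?_, ?_⟩
    · intro t ht
      exact hmemsize t ((List.takeWhile_sublist _).mem ht)
    · intro t ht
      exact hmemsize t ((List.dropWhile_sublist _).mem (List.mem_of_mem_tail ht))
    · have htf : (ts.takeWhile nl).dropWhile nl = [] := by
        rw [List.dropWhile_eq_nil_iff]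
        intro a ha
        exact List.mem_takeWhile_imp ha
      rw [psi_eq_nil _ htf]
      rw [← decompose hdw]
termination_by sizeOf ts
decreasing_by
  exact hss

/-! ### The bijection from binary trees -/

mutual
  noncomputable def bt2p : BT → PTree
    | .leaf => .node []
    | .node l r => psi (bl l) (br r)
  noncomputable def bl : BT → List PTree
    | .leaf => []
    | .node a b => bt2p b :: bl a
  noncomputable def br : BT → List PTree
    | .leaf => []
    | .node a b => bt2p a :: br b
end

theorem bt2p_stats (T : BT) :
    (bt2p T).edges = T.size ∧ eF (bl T) = T.size ∧ eF (br T) = T.size ∧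
    (bt2p T).cl = hookCount T ∧ cF (bl T) = hookAuxL T ∧ cF (br T) = hookAuxR T := by
  induction T with
  | leaf =>
    refine ⟨?_, ?_, ?_, ?_, ?_, ?_⟩ <;>
      simp [bt2p, bl, br, BT.size, hookCount, hookAuxL, hookAuxR]
  | node l r ihl ihr =>
    obtain ⟨el, ell, elr, cll, clll, cllr⟩ := ihl
    obtain ⟨er, erl, err, crr, crrl, crrr⟩ := ihr
    refine ⟨?_, ?_, ?_, ?_, ?_, ?_⟩
    · rw [bt2p, psi_edges, ell, err, BT.size]
    · rw [bl, eF_cons, er, ell, BT.size]; omega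
    · rw [br, eF_cons, el, err, BT.size]
    · rw [bt2p, psi_cl, clll, crrr, hookCount]
    · rw [bl, cF_cons, crr, clll, hookAuxL]
    · rw [br, cF_cons, cll, crrr, hookAuxR]

theorem bt2p_injAux (T : BT) :
    (∀ T', bt2p T = bt2p T' → T = T') ∧ (∀ T', bl T = bl T' → T = T') ∧
    (∀ T', br T = br T' → T = T') := by
  induction T with
  | leaf =>
    refine ⟨?_, ?_, ?_⟩ <;> intro T' h <;> cases T' with
    | leaf => rfl
    | node l r =>
      first
      | (rw [bt2p, bt2p] at h
         have := psi_isLeaf (bl l) (br r)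
         rw [← h] at this
         simp at this)
      | (rw [bl, bl] at h; simp at h)
      | (rw [br, br] at h; simp at h)
  | node l r ihl ihr =>
    refine ⟨?_, ?_, ?_⟩ <;> intro T' h <;> cases T' with
    | leaf =>
      first
      | (rw [bt2p, bt2p] at h
         have := psi_isLeaf (bl l) (br r)
         rw [h] at this
         simp at this)
      | (rw [bl, bl] at h; simp at h)
      | (rw [br, br] at h; simp at h)
    | node l' r' =>
      first
      | (rw [bt2p, bt2p] at h
         obtain ⟨h1, h2⟩ := psi_inj h
         rw [ihl.2.1 l' h1, ihr.2.2 r' h2])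
      | (rw [bl, bl] at h
         simp only [List.cons.injEq] at h
         rw [ihr.1 r' h.1, ihl.2.1 l' h.2])
      | (rw [br, br] at h
         simp only [List.cons.injEq] at h
         rw [ihl.1 l' h.1, ihr.2.2 r' h.2])

theorem bt2p_surjAux (F : List PTree) (h : ∀ w ∈ F, ∃ T, bt2p T = w) :
    (∃ l, bl l = F) ∧ (∃ r, br r = F) := by
  induction F with
  | nil => exact ⟨⟨.leaf, rfl⟩, ⟨.leaf, rfl⟩⟩
  | cons w F ih =>
    obtain ⟨T, hT⟩ := h w (by simp)
    obtain ⟨⟨l, hl⟩, ⟨r, hr⟩⟩ := ih (fun w hw => h w (by simp [hw]))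
    exact ⟨⟨.node l T, by rw [bl, hT, hl]⟩, ⟨.node T r, by rw [br, hT, hr]⟩⟩

theorem bt2p_surj (W : PTree) : ∃ T, bt2p T = W := by
  obtain ⟨ts⟩ := W
  by_cases h : ts = []
  · exact ⟨.leaf, by rw [h]; rfl⟩
  · obtain ⟨F1, F2, hb1, hb2, hpsi⟩ := psi_surj ts h
    have h1 : ∀ w ∈ F1, ∃ T, bt2p T = w := fun w hw => bt2p_surj w
    have h2 : ∀ w ∈ F2, ∃ T, bt2p T = w := fun w hw => bt2p_surj w
    obtain ⟨⟨l, hl⟩, _⟩ := bt2p_surjAux F1 h1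
    obtain ⟨_, ⟨r, hr⟩⟩ := bt2p_surjAux F2 h2
    exact ⟨.node l r, by rw [bt2p, hl, hr, hpsi]⟩
termination_by sizeOf W
decreasing_by
  · exact hb1 w hw
  · exact hb2 w hw

noncomputable def btEquiv : BT ≃ PTree :=
  Equiv.ofBijective bt2p ⟨fun T T' h => (bt2p_injAux T).1 T' h, bt2p_surj⟩

/-- For all `n`, `k`, the number of binary trees with `n` vertices
and hook number `k` equals the number of rooted plane (ordered) trees with `n` edges
having exactly `k` vertices with at least one child which is a leaf. -/
theorem stmt19 (n k : ℕ) :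
    Nat.card {T : BT // T.size = n ∧ hookCount T = k} =
      Nat.card {W : PTree // W.edges = n ∧ W.cl = k} := by
  refine Nat.card_congr (Equiv.subtypeEquiv btEquiv fun T => ?_)
  have h := bt2p_stats T
  show T.size = n ∧ hookCount T = k ↔ (bt2p T).edges = n ∧ (bt2p T).cl = k
  simp only [btEquiv, Equiv.ofBijective_apply, h.1, h.2.2.2.1]
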